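/- Let 1 < p, q < ∞ with 1/p + 1/q = 1, let φₙ : Ω → ℝ and φ'ₙ : Ω' → ℝ satisfy condition (C-p), let μ' be a finite Borel measure on Ω' with each φ'ₙ measurable, and suppose C' := sup_{y∈Ω'} ∑ₙ |φ'ₙ(y)|^p < ∞. Then for every ξ ∈ L_q(μ'): (i) the sequence c = (cₙ) defined by cₙ := ∫_{Ω'} φ'ₙ(y)ξ(y) dμ'(y) belongs to ℓp and ‖c‖_{ℓp} ≤ (C'·μ'(Ω'))^{1/p} ‖ξ‖_{L_q(μ')}; (ii) for every x ∈ Ω, ∫_{Ω'} K(x,y)ξ(y) dμ'(y) = ∑ₙ cₙφₙ(x) = f_c(x); (iii) for every b ∈ ℓq, ∫_{Ω'} g_b(y)ξ(y) dμ'(y) = ∑ₙ bₙcₙ, where g_b(y) := ∑ₙ bₙφ'ₙ(y). (The integral operator of the adjoint kernel maps L_q(Ω') into the p-norm space B_K^p(Ω) continuously and realizes the duality pairing.) -/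

import Mathlib

open MeasureTheory

/-- **The integral operator of the adjoint kernel maps `L_q(Ω')` continuously into
the p-norm space `B_K^p(Ω)` and realizes the duality pairing.**
Under condition (C-p), with `μ'` a finite measure and
`C' := sup_y ∑ₙ |φ'ₙ y|^p < ∞`, for every `ξ ∈ L_q(μ')`: (i) the coefficient
sequence `cₙ := ∫ φ'ₙ(y) ξ(y) dμ'(y)` lies in `ℓp` with
`‖c‖_{ℓp} ≤ (C' μ'(Ω'))^{1/p} ‖ξ‖_{L_q}`; (ii) `∫ K(x,y) ξ(y) dμ'(y) = ∑ₙ cₙ φₙ(x)`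
for every `x`; (iii) `∫ g_b(y) ξ(y) dμ'(y) = ∑ₙ bₙ cₙ` for every `b ∈ ℓq`. -/
theorem stmt4 {Ω Ω' : Type*} [MeasurableSpace Ω'] (μ' : Measure Ω')
    [IsFiniteMeasure μ']
    (p q : ℝ) (hp : 1 < p) (hq : 1 < q) (hpq : 1 / p + 1 / q = 1)
    (φ : ℕ → Ω → ℝ) (φ' : ℕ → Ω' → ℝ)
    (hCp₁ : ∀ x : Ω, Summable fun n => |φ n x| ^ q)
    (hCp₂ : ∀ y : Ω', Summable fun n => |φ' n y| ^ p)
    (hmeas : ∀ n, Measurable (φ' n))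
    (C' : ℝ) (hC' : ∀ y : Ω', ∑' n, |φ' n y| ^ p ≤ C') :
    ∀ ξ : Ω' → ℝ, MemLp ξ (ENNReal.ofReal q) μ' →
      -- (i) the coefficient sequence belongs to ℓp with the norm bound
      (Summable fun n => |∫ y, φ' n y * ξ y ∂μ'| ^ p) ∧
      (∑' n, |∫ y, φ' n y * ξ y ∂μ'| ^ p) ^ (1 / p) ≤
        (C' * (μ' Set.univ).toReal) ^ (1 / p) *
          (eLpNorm ξ (ENNReal.ofReal q) μ').toReal ∧
      -- (ii) the integral operator of the adjoint kernel
      (∀ x : Ω,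
        ∫ y, (∑' n, φ n x * φ' n y) * ξ y ∂μ' =
          ∑' n, (∫ y, φ' n y * ξ y ∂μ') * φ n x) ∧
      -- (iii) the duality pairing
      (∀ b : ℕ → ℝ, (Summable fun n => |b n| ^ q) →
        ∫ y, (∑' n, b n * φ' n y) * ξ y ∂μ' =
          ∑' n, b n * (∫ y, φ' n y * ξ y ∂μ')) := by
  intro ξ hξ
  have hp0 : (0 : ℝ) < p := lt_trans one_pos hp
  have hq0 : (0 : ℝ) < q := lt_trans one_pos hq
  have hpq' : Real.HolderConjugate p q := ⟨by simpa [one_div] using hpq, hp0, hq0⟩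
  rcases isEmpty_or_nonempty Ω' with hE | hE
  · have h0 : ∀ f : Ω' → ℝ, ∫ y, f y ∂μ' = 0 := fun f => by
      rw [μ'.eq_zero_of_isEmpty]; exact integral_zero_measure f
    have hμ0 : (μ' Set.univ).toReal = 0 := by rw [μ'.eq_zero_of_isEmpty]; simp
    refine ⟨?_, ?_, ?_, ?_⟩
    · simp only [h0, abs_zero, Real.zero_rpow hp0.ne']
      exact summable_zero
    · simp only [h0, abs_zero, Real.zero_rpow hp0.ne', tsum_zero, hμ0, mul_zero,
        Real.zero_rpow (one_div_ne_zero hp0.ne'), zero_mul, le_refl]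
    · intro x; simp only [h0, zero_mul, tsum_zero]
    · intro b hb; simp only [h0, mul_zero, tsum_zero]
  · -- main case
    have hC'0 : 0 ≤ C' :=
      le_trans (tsum_nonneg fun n => Real.rpow_nonneg (abs_nonneg _) p)
        (hC' (Classical.arbitrary Ω'))
    have hpow_le : ∀ n y, |φ' n y| ^ p ≤ C' := fun n y =>
      le_trans (Summable.le_tsum (hCp₂ y) n fun m _ => Real.rpow_nonneg (abs_nonneg _) p) (hC' y)
    have hbd : ∀ n y, |φ' n y| ≤ C' ^ (1 / p) := by
      intro n y
      have h := Real.rpow_le_rpow (Real.rpow_nonneg (abs_nonneg _) p) (hpow_le n y)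
        (by positivity : (0:ℝ) ≤ 1 / p)
      have h2 : (|φ' n y| ^ p) ^ (1 / p) = |φ' n y| := by
        rw [one_div, Real.rpow_rpow_inv (abs_nonneg _) hp0.ne']
      rwa [h2] at h
    have hφ'mem : ∀ (n : ℕ) (e : ENNReal), MemLp (φ' n) e μ' := fun n e =>
      MemLp.of_bound (hmeas n).aestronglyMeasurable _
        (Filter.Eventually.of_forall fun y => by rw [Real.norm_eq_abs]; exact hbd n y)
    have hξ1 : Integrable ξ μ' := by
      have h1 : (1 : ENNReal) ≤ ENNReal.ofReal q := by
        rw [← ENNReal.ofReal_one]; exact ENNReal.ofReal_le_ofReal hq.le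
      exact memLp_one_iff_integrable.mp (hξ.mono_exponent h1)
    have hint : ∀ n, Integrable (fun y => φ' n y * ξ y) μ' := fun n =>
      hξ1.bdd_mul (hmeas n).aestronglyMeasurable
        (c := C' ^ (1 / p)) (Filter.Eventually.of_forall fun y => by rw [Real.norm_eq_abs]; exact hbd n y)
    have hA0 : ∀ n, (0 : ℝ) ≤ ∫ y, |φ' n y| ^ p ∂μ' := fun n =>
      integral_nonneg fun y => Real.rpow_nonneg (abs_nonneg _) p
    have hB0 : (0 : ℝ) ≤ (∫ y, |ξ y| ^ q ∂μ') ^ (1 / q) :=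
      Real.rpow_nonneg (integral_nonneg fun y => Real.rpow_nonneg (abs_nonneg _) q) _
    have hHold : ∀ n, ∫ y, |φ' n y| * |ξ y| ∂μ' ≤
        (∫ y, |φ' n y| ^ p ∂μ') ^ (1 / p) * (∫ y, |ξ y| ^ q ∂μ') ^ (1 / q) := by
      intro n
      have h := integral_mul_norm_le_Lp_mul_Lq (μ := μ') hpq'
        (hφ'mem n (ENNReal.ofReal p)) hξ
      simpa [Real.norm_eq_abs] using h
    have hcA : ∀ n, |∫ y, φ' n y * ξ y ∂μ'| ≤
        (∫ y, |φ' n y| ^ p ∂μ') ^ (1 / p) * (∫ y, |ξ y| ^ q ∂μ') ^ (1 / q) := by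
      intro n
      calc |∫ y, φ' n y * ξ y ∂μ'| ≤ ∫ y, |φ' n y| * |ξ y| ∂μ' := by
            simpa [Real.norm_eq_abs, abs_mul] using
              norm_integral_le_integral_norm (μ := μ') (fun y => φ' n y * ξ y)
        _ ≤ _ := hHold n
    have hAint : ∀ n, Integrable (fun y => |φ' n y| ^ p) μ' := by
      intro n
      refine memLp_one_iff_integrable.mp (MemLp.of_bound ?_ C'
        (Filter.Eventually.of_forall fun y => ?_))
      · exact ((Real.continuous_rpow_const hp0.le).measurable.comp
          (hmeas n).abs).aestronglyMeasurable
      · rw [Real.norm_eq_abs, abs_of_nonneg (Real.rpow_nonneg (abs_nonneg _) p)]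
        exact hpow_le n y
    have hpartial : ∀ N : ℕ, ∑ n ∈ Finset.range N, ∫ y, |φ' n y| ^ p ∂μ' ≤
        C' * (μ' Set.univ).toReal := by
      intro N
      rw [← integral_finset_sum _ fun n _ => hAint n]
      have h2 : ∫ y, ∑ n ∈ Finset.range N, |φ' n y| ^ p ∂μ' ≤ ∫ _, C' ∂μ' := by
        refine integral_mono (integrable_finset_sum _ fun n _ => hAint n)
          (integrable_const _) fun y => ?_
        exact le_trans (Summable.sum_le_tsum _ (fun m _ => Real.rpow_nonneg (abs_nonneg _) p)
          (hCp₂ y)) (hC' y)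
      rw [integral_const, smul_eq_mul, measureReal_def] at h2
      linarith [h2]
    have hAsum : Summable fun n => ∫ y, |φ' n y| ^ p ∂μ' :=
      summable_of_sum_range_le hA0 hpartial
    have hAtsum : ∑' n, ∫ y, |φ' n y| ^ p ∂μ' ≤ C' * (μ' Set.univ).toReal :=
      Real.tsum_le_of_sum_range_le hA0 hpartial
    -- pointwise bound for |c n| ^ p
    have hcp : ∀ n, |∫ y, φ' n y * ξ y ∂μ'| ^ p ≤
        (∫ y, |φ' n y| ^ p ∂μ') * ((∫ y, |ξ y| ^ q ∂μ') ^ (1 / q)) ^ p := by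
      intro n
      have h := Real.rpow_le_rpow (abs_nonneg _) (hcA n) hp0.le
      rwa [Real.mul_rpow (Real.rpow_nonneg (hA0 n) _) hB0, one_div,
        Real.rpow_inv_rpow (hA0 n) hp0.ne'] at h
    have hcsum : Summable fun n => |∫ y, φ' n y * ξ y ∂μ'| ^ p :=
      Summable.of_nonneg_of_le (fun n => Real.rpow_nonneg (abs_nonneg _) p) hcp
        (hAsum.mul_right _)
    have htsum_c : ∑' n, |∫ y, φ' n y * ξ y ∂μ'| ^ p ≤
        (C' * (μ' Set.univ).toReal) * ((∫ y, |ξ y| ^ q ∂μ') ^ (1 / q)) ^ p := by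
      calc ∑' n, |∫ y, φ' n y * ξ y ∂μ'| ^ p
          ≤ ∑' n, (∫ y, |φ' n y| ^ p ∂μ') * ((∫ y, |ξ y| ^ q ∂μ') ^ (1 / q)) ^ p :=
            Summable.tsum_le_tsum hcp hcsum (hAsum.mul_right _)
        _ = (∑' n, ∫ y, |φ' n y| ^ p ∂μ') * ((∫ y, |ξ y| ^ q ∂μ') ^ (1 / q)) ^ p :=
            tsum_mul_right
        _ ≤ _ := mul_le_mul_of_nonneg_right hAtsum (Real.rpow_nonneg hB0 _)
    have hnorm : (eLpNorm ξ (ENNReal.ofReal q) μ').toReal = (∫ y, |ξ y| ^ q ∂μ') ^ (1 / q) := by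
      rw [hξ.eLpNorm_eq_integral_rpow_norm (by simp [hq0]) ENNReal.ofReal_ne_top,
        ENNReal.toReal_ofReal (Real.rpow_nonneg
          (integral_nonneg fun y => Real.rpow_nonneg (norm_nonneg _) _) _)]
      simp only [ENNReal.toReal_ofReal hq0.le, Real.norm_eq_abs, one_div]
    -- the duality pairing, used for both (ii) and (iii)
    have key : ∀ b : ℕ → ℝ, (Summable fun n => |b n| ^ q) →
        ∫ y, (∑' n, b n * φ' n y) * ξ y ∂μ' = ∑' n, b n * (∫ y, φ' n y * ξ y ∂μ') := by
      intro b hb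
      have hint' : ∀ n, Integrable (fun y => b n * (φ' n y * ξ y)) μ' := fun n =>
        (hint n).const_mul _
      have hnorm_le : ∀ n, (∫ y, ‖b n * (φ' n y * ξ y)‖ ∂μ') ≤
          (|b n| ^ q / q + (∫ y, |φ' n y| ^ p ∂μ') / p) * (∫ y, |ξ y| ^ q ∂μ') ^ (1 / q) := by
        intro n
        have h1 : ∫ y, ‖b n * (φ' n y * ξ y)‖ ∂μ' = |b n| * ∫ y, |φ' n y| * |ξ y| ∂μ' := by
          rw [← integral_const_mul]
          congr 1; ext y
          rw [Real.norm_eq_abs, abs_mul, abs_mul]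
        rw [h1]
        calc |b n| * ∫ y, |φ' n y| * |ξ y| ∂μ'
            ≤ |b n| * ((∫ y, |φ' n y| ^ p ∂μ') ^ (1 / p) * (∫ y, |ξ y| ^ q ∂μ') ^ (1 / q)) :=
              mul_le_mul_of_nonneg_left (hHold n) (abs_nonneg _)
          _ = (|b n| * (∫ y, |φ' n y| ^ p ∂μ') ^ (1 / p)) * (∫ y, |ξ y| ^ q ∂μ') ^ (1 / q) := by
              ring
          _ ≤ (|b n| ^ q / q + (∫ y, |φ' n y| ^ p ∂μ') / p) * (∫ y, |ξ y| ^ q ∂μ') ^ (1 / q) := by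
              refine mul_le_mul_of_nonneg_right ?_ hB0
              have hy : |b n| * (∫ y, |φ' n y| ^ p ∂μ') ^ (1 / p) ≤
                  |b n| ^ q / q + ((∫ y, |φ' n y| ^ p ∂μ') ^ (1 / p)) ^ p / p :=
                Real.young_inequality_of_nonneg (abs_nonneg (b n))
                  (Real.rpow_nonneg (hA0 n) _) hpq'.symm
              have h2 : ((∫ y, |φ' n y| ^ p ∂μ') ^ (1 / p)) ^ p = ∫ y, |φ' n y| ^ p ∂μ' := by
                rw [one_div, Real.rpow_inv_rpow (hA0 n) hp0.ne']
              rwa [h2] at hy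
      have hsum' : Summable fun n => ∫ y, ‖b n * (φ' n y * ξ y)‖ ∂μ' :=
        Summable.of_nonneg_of_le (fun n => integral_nonneg fun y => norm_nonneg _) hnorm_le
          (((hb.div_const q).add (hAsum.div_const p)).mul_right _)
      have h := integral_tsum_of_summable_integral_norm hint' hsum'
      have hL : ∀ y, ∑' n, b n * (φ' n y * ξ y) = (∑' n, b n * φ' n y) * ξ y := by
        intro y
        simp_rw [← mul_assoc]
        exact tsum_mul_right
      calc ∫ y, (∑' n, b n * φ' n y) * ξ y ∂μ'
          = ∫ y, ∑' n, b n * (φ' n y * ξ y) ∂μ' := by simp_rw [hL]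
        _ = ∑' n, ∫ y, b n * (φ' n y * ξ y) ∂μ' := h.symm
        _ = ∑' n, b n * ∫ y, φ' n y * ξ y ∂μ' :=
            tsum_congr fun n => integral_const_mul _ _
    refine ⟨hcsum, ?_, ?_, key⟩
    · have h := Real.rpow_le_rpow (tsum_nonneg fun n => Real.rpow_nonneg (abs_nonneg _) _)
        htsum_c (by positivity : (0:ℝ) ≤ 1 / p)
      have hBp : ((((∫ y, |ξ y| ^ q ∂μ') ^ (1 / q)) ^ p) ^ (1 / p) : ℝ) =
          (∫ y, |ξ y| ^ q ∂μ') ^ (1 / q) := by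
        rw [one_div p, Real.rpow_rpow_inv hB0 hp0.ne']
      rw [Real.mul_rpow (mul_nonneg hC'0 ENNReal.toReal_nonneg)
        (Real.rpow_nonneg hB0 _), hBp] at h
      rwa [hnorm]
    · intro x
      rw [key (fun n => φ n x) (hCp₁ x)]
      exact tsum_congr fun n => mul_comm _ _
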